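/- (GCES satisfies DUM.) For every probabilistic database p over D with endogenous/exogenous partition (D^en, D^ex), every Boolean query Q : Finset D → {0,1}, and every τ ∈ D^en: if Δ(Q,W,τ) = 0 for every W ⊆ D^en \ {τ}, then CE(p,Q,τ) = 0. -/
import Mathlib


open Finset

variable {α : Type*} [DecidableEq α]

/-- The positively intervened distribution `p^{+τ}`:
`p^{+τ}(W) = Σ_{W' ⊆ D, W' ∪ {τ} = W} p(W')`. -/
noncomputable def pPlus (D : Finset α) (p : Finset α → ℝ) (τ : α) (W : Finset α) : ℝ :=
  ∑ W' ∈ D.powerset.filter (fun W' => W' ∪ {τ} = W), p W'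

/-- The negatively intervened distribution `p^{−τ}`:
`p^{−τ}(W) = Σ_{W' ⊆ D, W' \ {τ} = W} p(W')`. -/
noncomputable def pMinus (D : Finset α) (p : Finset α → ℝ) (τ : α) (W : Finset α) : ℝ :=
  ∑ W' ∈ D.powerset.filter (fun W' => W' \ {τ} = W), p W'

/-- The generalized causal-effect score of tuple `τ` for query `Q` on the PDB `p` over `D`:
`CE(p,Q,τ) = Σ_{W ⊆ D} p^{+τ}(W)·Q[W] − Σ_{W ⊆ D} p^{−τ}(W)·Q[W]`. -/
noncomputable def CE (D : Finset α) (p : Finset α → ℝ) (Q : Finset α → ℝ) (τ : α) : ℝ :=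
  ∑ W ∈ D.powerset, pPlus D p τ W * Q W - ∑ W ∈ D.powerset, pMinus D p τ W * Q W

/-- `Δ(Q,W,τ) = Q[W ∪ D^ex ∪ {τ}] − Q[W ∪ D^ex]`. -/
noncomputable def Delta (Dex : Finset α) (Q : Finset α → ℝ) (W : Finset α) (τ : α) : ℝ :=
  Q (W ∪ Dex ∪ {τ}) - Q (W ∪ Dex)

/-- (GCES satisfies DUM.) For any PDB `p` over `D = D^en ∪ D^ex` (vanishing on worlds
not containing `D^ex`), any Boolean query `Q`, and any endogenous tuple `τ`:
if `Δ(Q,W,τ) = 0` for every `W ⊆ D^en \ {τ}`, then `CE(p,Q,τ) = 0`. -/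
theorem stmt3 (D Den Dex : Finset α)
    (hunion : Den ∪ Dex = D) (hdisj : Disjoint Den Dex)
    (p : Finset α → ℝ)
    (hp0 : ∀ W ∈ D.powerset, 0 ≤ p W)
    (hp1 : ∑ W ∈ D.powerset, p W = 1)
    (hexo : ∀ W ∈ D.powerset, ¬ Dex ⊆ W → p W = 0)
    (Q : Finset α → ℝ) (hBool : ∀ W ⊆ D, Q W = 0 ∨ Q W = 1)
    (τ : α) (hτ : τ ∈ Den)
    (hdum : ∀ W ⊆ Den.erase τ, Delta Dex Q W τ = 0) :
    CE D p Q τ = 0 := by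
  have hτD : τ ∈ D := by rw [← hunion]; exact mem_union_left _ hτ
  have hplus : ∑ W ∈ D.powerset, pPlus D p τ W * Q W
      = ∑ W' ∈ D.powerset, p W' * Q (W' ∪ {τ}) := by
    refine Eq.trans ?_ (Finset.sum_fiberwise_of_maps_to (g := fun W' => W' ∪ {τ})
      (fun W' hW' => mem_powerset.mpr
        (union_subset (mem_powerset.mp hW') (by simpa using hτD)))
      (fun W' => p W' * Q (W' ∪ {τ})))
    refine Finset.sum_congr rfl fun W _ => ?_
    simp only [pPlus, Finset.sum_mul]
    refine Finset.sum_congr rfl fun W' hW' => ?_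
    rw [(mem_filter.mp hW').2]
  have hminus : ∑ W ∈ D.powerset, pMinus D p τ W * Q W
      = ∑ W' ∈ D.powerset, p W' * Q (W' \ {τ}) := by
    refine Eq.trans ?_ (Finset.sum_fiberwise_of_maps_to (g := fun W' => W' \ {τ})
      (fun W' hW' => mem_powerset.mpr ((sdiff_subset).trans (mem_powerset.mp hW')))
      (fun W' => p W' * Q (W' \ {τ})))
    refine Finset.sum_congr rfl fun W _ => ?_
    simp only [pMinus, Finset.sum_mul]
    refine Finset.sum_congr rfl fun W' hW' => ?_
    rw [(mem_filter.mp hW').2]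
  rw [CE, hplus, hminus, ← Finset.sum_sub_distrib]
  refine Finset.sum_eq_zero fun W' hW' => ?_
  rw [← mul_sub]
  by_cases hpz : p W' = 0
  · rw [hpz, zero_mul]
  · have hex : Dex ⊆ W' := by
      by_contra h
      exact hpz (hexo W' hW' h)
    have hW'D : W' ⊆ D := mem_powerset.mp hW'
    set V := (W' ∩ Den).erase τ with hV
    have hVsub : V ⊆ Den.erase τ := erase_subset_erase τ inter_subset_right
    have hkey : Delta Dex Q V τ = 0 := hdum V hVsub
    have hτex : τ ∉ Dex := fun h => (disjoint_left.mp hdisj hτ) h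
    have h1 : W' \ {τ} = V ∪ Dex := by
      ext x
      simp only [hV, mem_sdiff, mem_union, mem_erase, mem_inter, mem_singleton]
      constructor
      · rintro ⟨hx, hne⟩
        rcases mem_union.mp (hunion ▸ hW'D hx) with h | h
        · exact Or.inl ⟨hne, hx, h⟩
        · exact Or.inr h
      · rintro (⟨hne, hx, _⟩ | hx)
        · exact ⟨hx, hne⟩
        · exact ⟨hex hx, fun he => hτex (he ▸ hx)⟩
    have h2 : W' ∪ {τ} = V ∪ Dex ∪ {τ} := by
      ext x
      by_cases hx : x = τ
      · simp [hx]
      · have : x ∈ W' ∪ {τ} ↔ x ∈ W' \ {τ} := by simp [hx]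
        rw [this, h1]; simp [hx]
    rw [h1, h2]
    simp only [Delta] at hkey
    rw [hkey, mul_zero]
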